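/- Let Ω₁ ⊂ ℍ_s^n be real-path-connected, let Ω₂ ⊂ ℍ_s^n be Ω₁-stem-preserving, let f : Ω₂ → ℍ be path-slice, let γ ∈ 𝒫(ℂ^n, Ω₁), and let I ∈ 𝕊(Ω₁, γ) be such that f^s_{Ω₁}(γ^I(1)) = 0. Then f^s_{Ω₁}(γ^J(1)) = 0 for every J ∈ 𝕊(Ω₁, γ); that is, γ^{𝕊(Ω₁,γ)}(1) := {γ^J(1) : J ∈ 𝕊(Ω₁, γ)} is contained in the zero set of f^s_{Ω₁}. -/

import Mathlib

open scoped Quaternion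
open Classical

attribute [local instance] Classical.propDecidable

noncomputable section

/-- Continuous-path carrier type: maps from `[0,1]` to `ℂⁿ`. -/
abbrev PathC (n : ℕ) := unitInterval → (Fin n → ℂ)

/-- The sphere of quaternionic imaginary units `𝕊 = {I : I² = -1}`. -/
def SQ : Set ℍ[ℝ] := {I | I ^ 2 = -1}

/-- A quaternion is real if it is the image of a real number. -/
def IsRealQ (p : ℍ[ℝ]) : Prop := ∃ r : ℝ, p = (r : ℍ[ℝ])

/-- `Ψ_i^I : ℂⁿ → ℂ_Iⁿ`, componentwise `x + y i ↦ x + y I`. -/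
def psi {n : ℕ} (I : ℍ[ℝ]) (z : Fin n → ℂ) : Fin n → ℍ[ℝ] :=
  fun k => ((z k).re : ℍ[ℝ]) + (z k).im • I

/-- The slice `ℂ_I = {x + y I}` as a subset of the quaternions. -/
def CI (I : ℍ[ℝ]) : Set ℍ[ℝ] := {p | ∃ x y : ℝ, p = (x : ℍ[ℝ]) + y • I}

/-- The weakly slice cone `ℍ_sⁿ = ⋃_{I ∈ 𝕊} ℂ_Iⁿ`. -/
def HSliceCone (n : ℕ) : Set (Fin n → ℍ[ℝ]) := ⋃ I ∈ SQ, Set.range (psi (n := n) I)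

/-- Membership in `𝒫(ℂⁿ)`: continuous with real initial point. -/
def IsPathP {n : ℕ} (γ : PathC n) : Prop :=
  Continuous γ ∧ ∀ k, ((γ 0) k).im = 0

/-- `γ^I ⊂ Ω`. -/
def pathInSlice {n : ℕ} (Ω : Set (Fin n → ℍ[ℝ])) (I : ℍ[ℝ]) (γ : PathC n) : Prop :=
  ∀ t, psi I (γ t) ∈ Ω

/-- `𝕊(Ω, γ) = {I ∈ 𝕊 : γ^I ⊂ Ω}`. -/
def SGamma {n : ℕ} (Ω : Set (Fin n → ℍ[ℝ])) (γ : PathC n) : Set ℍ[ℝ] :=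
  {I | I ∈ SQ ∧ pathInSlice Ω I γ}

/-- `γ ∈ 𝒫(ℂⁿ, Ω)`. -/
def PathIn {n : ℕ} (Ω : Set (Fin n → ℍ[ℝ])) (γ : PathC n) : Prop :=
  IsPathP γ ∧ ∃ I, I ∈ SGamma Ω γ

/-- `F` is a path-slice stem function of `f` on `Ω`. -/
def IsStem {n : ℕ} (Ω : Set (Fin n → ℍ[ℝ])) (f : (Fin n → ℍ[ℝ]) → ℍ[ℝ])
    (F : PathC n → ℍ[ℝ] × ℍ[ℝ]) : Prop :=
  ∀ γ, PathIn Ω γ → ∀ I ∈ SGamma Ω γ, f (psi I (γ 1)) = (F γ).1 + I * (F γ).2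

/-- `f` is a path-slice function on `Ω`. -/
def PathSlice {n : ℕ} (Ω : Set (Fin n → ℍ[ℝ])) (f : (Fin n → ℍ[ℝ]) → ℍ[ℝ]) : Prop :=
  ∃ F, IsStem Ω f F

/-- `Ω` is real-path-connected. -/
def RealPathConnected {n : ℕ} (Ω : Set (Fin n → ℍ[ℝ])) : Prop :=
  ∀ q ∈ Ω, ∃ γ : PathC n, PathIn Ω γ ∧ ∃ I ∈ SGamma Ω γ, psi I (γ 1) = q

/-- `Ω₂` is `Ω₁`-stem-preserving. -/
def StemPreserving {n : ℕ} (Ω₁ Ω₂ : Set (Fin n → ℍ[ℝ])) : Prop :=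
  (∀ γ : PathC n, PathIn Ω₁ γ → (SGamma Ω₂ γ).Nontrivial) ∧
  (∀ α β : PathC n, PathIn Ω₁ α → PathIn Ω₁ β → α 1 = β 1 →
    ¬ ∃ I, SGamma Ω₂ α ∩ SGamma Ω₂ β = {I})

/-- `Ω` is self-stem-preserving. -/
def SelfStemPreserving {n : ℕ} (Ω : Set (Fin n → ℍ[ℝ])) : Prop :=
  RealPathConnected Ω ∧ StemPreserving Ω Ω

/-- The map `𝕴 : ℍ_sⁿ → 𝕊 ∪ {0}`. -/
def frakI {n : ℕ} (q : Fin n → ℍ[ℝ]) : ℍ[ℝ] :=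
  if h : ∀ k, IsRealQ (q k) then 0
  else
    let k := (Finset.univ.filter fun k => ¬ IsRealQ (q k)).min' (by
      push_neg at h
      obtain ⟨k, hk⟩ := h
      exact ⟨k, Finset.mem_filter.mpr ⟨Finset.mem_univ k, hk⟩⟩)
    ‖q k - ((q k).re : ℍ[ℝ])‖⁻¹ • (q k - ((q k).re : ℍ[ℝ]))

/-- A choice of path-slice stem function of `f` (on paths in `Ω`); by
the results of Dou–Jin–Ren–Yang its restriction to `𝒫(ℂⁿ, Ω₁)` is the canonical `F^f_{Ω₁}`. -/
def stemOf {n : ℕ} (Ω : Set (Fin n → ℍ[ℝ])) (f : (Fin n → ℍ[ℝ]) → ℍ[ℝ]) :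
    PathC n → ℍ[ℝ] × ℍ[ℝ] :=
  Classical.epsilon (IsStem Ω f)

/-- The function `ℱ^f_{Ω₁} : Ω₁ → ℍ²` induced by the stem of `f` (path-slice on `Ω₂`). -/
def scrF {n : ℕ} (Ω₁ Ω₂ : Set (Fin n → ℍ[ℝ])) (f : (Fin n → ℍ[ℝ]) → ℍ[ℝ])
    (q : Fin n → ℍ[ℝ]) : ℍ[ℝ] × ℍ[ℝ] :=
  if ∀ k, IsRealQ (q k) then (f q, 0)
  else stemOf Ω₂ f (Classical.epsilon (fun γ : PathC n =>
    PathIn Ω₁ γ ∧ pathInSlice Ω₁ (frakI q) γ ∧ psi (frakI q) (γ 1) = q))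

/-- The `Ω₁`-slice conjugation `f^c_{Ω₁}`. -/
def sliceConj {n : ℕ} (Ω₁ Ω₂ : Set (Fin n → ℍ[ℝ])) (f : (Fin n → ℍ[ℝ]) → ℍ[ℝ]) :
    (Fin n → ℍ[ℝ]) → ℍ[ℝ] :=
  fun q => star (scrF Ω₁ Ω₂ f q).1 + frakI q * star (scrF Ω₁ Ω₂ f q).2

/-- The `*`-product `g * f` of a path-slice `g : Ω₁ → ℍ` with `f : Ω₂ → ℍ`. -/
def starProdF {n : ℕ} (Ω₁ Ω₂ : Set (Fin n → ℍ[ℝ])) (g f : (Fin n → ℍ[ℝ]) → ℍ[ℝ]) :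
    (Fin n → ℍ[ℝ]) → ℍ[ℝ] :=
  fun q => g q * (scrF Ω₁ Ω₂ f q).1 + frakI q * g q * (scrF Ω₁ Ω₂ f q).2

/-- The symmetrization `f^s_{Ω₁} = f^c_{Ω₁} * f`. -/
def symmF {n : ℕ} (Ω₁ Ω₂ : Set (Fin n → ℍ[ℝ])) (f : (Fin n → ℍ[ℝ]) → ℍ[ℝ]) :
    (Fin n → ℍ[ℝ]) → ℍ[ℝ] :=
  starProdF Ω₁ Ω₂ (sliceConj Ω₁ Ω₂ f) f

/-- The pointwise `*`-product on `ℍ²`. -/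
def starPair (p q : ℍ[ℝ] × ℍ[ℝ]) : ℍ[ℝ] × ℍ[ℝ] :=
  (p.1 * q.1 - p.2 * q.2, p.2 * q.1 + p.1 * q.2)

/-- Slice-open sets: every slice is open (pulled back to `ℂⁿ` via `Ψ_i^I`). -/
def SliceOpen {n : ℕ} (U : Set (Fin n → ℍ[ℝ])) : Prop :=
  ∀ I ∈ SQ, IsOpen {z : Fin n → ℂ | psi I z ∈ U}

/-- Weakly slice regular functions: each slice restriction is left `I`-holomorphic. -/
def SliceRegular {n : ℕ} (Ω : Set (Fin n → ℍ[ℝ])) (f : (Fin n → ℍ[ℝ]) → ℍ[ℝ]) : Prop :=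
  ∀ I ∈ SQ, ∀ z : Fin n → ℂ, psi I z ∈ Ω →
    DifferentiableWithinAt ℝ (fun w => f (psi I w)) {w | psi I w ∈ Ω} z ∧
    ∀ ℓ : Fin n,
      fderivWithin ℝ (fun w => f (psi I w)) {w | psi I w ∈ Ω} z (Pi.single ℓ 1)
        + I * fderivWithin ℝ (fun w => f (psi I w)) {w | psi I w ∈ Ω} z (Pi.single ℓ Complex.I)
        = 0

/-- The ball `B_I(q, r)` inside the slice `ℂ_Iⁿ`. -/
def BI {n : ℕ} (I : ℍ[ℝ]) (q : Fin n → ℍ[ℝ]) (r : ℝ) : Set (Fin n → ℍ[ℝ]) :=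
  {p | p ∈ Set.range (psi (n := n) I) ∧ dist p q < r}

/-- The slice topology. -/
def sliceTop (n : ℕ) : TopologicalSpace (Fin n → ℍ[ℝ]) where
  IsOpen := SliceOpen
  isOpen_univ := by intro I _; simpa using isOpen_univ
  isOpen_inter := by
    intro s t hs ht I hI
    have h : {z : Fin n → ℂ | psi I z ∈ s ∩ t}
        = {z : Fin n → ℂ | psi I z ∈ s} ∩ {z : Fin n → ℂ | psi I z ∈ t} := by
      ext z; simp [Set.mem_inter_iff]
    rw [h]
    exact (hs I hI).inter (ht I hI)
  isOpen_sUnion := by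
    intro S hS I hI
    have h : {z : Fin n → ℂ | psi I z ∈ ⋃₀ S} = ⋃ s ∈ S, {z : Fin n → ℂ | psi I z ∈ s} := by
      ext z; simp
    rw [h]
    exact isOpen_biUnion fun s hs => hS s hs I hI

/-- Slice-domains: nonempty slice-open sets connected in the slice topology. -/
def SliceDomain {n : ℕ} (Ω : Set (Fin n → ℍ[ℝ])) : Prop :=
  SliceOpen Ω ∧ @IsConnected _ (sliceTop n) Ω

/-- Concatenation `γ · ℒ_{γ(1)}^z` of a path with the segment from `γ(1)` to `z`. -/
def concatSeg {n : ℕ} (γ : PathC n) (z : Fin n → ℂ) : PathC n := fun t =>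
  if h : (t : ℝ) ≤ 1 / 2 then
    γ ⟨2 * (t : ℝ), ⟨by linarith [t.2.1], by linarith⟩⟩
  else
    (1 - (2 * (t : ℝ) - 1)) • γ 1 + (2 * (t : ℝ) - 1) • z

/-- The action of `σ` on `ℍ²`: `σ(p₁, p₂) = (-p₂, p₁)`. -/
def sigmaAct (p : ℍ[ℝ] × ℍ[ℝ]) : ℍ[ℝ] × ℍ[ℝ] := (-p.2, p.1)

/-- `F : 𝒫(ℂⁿ, Ω) → ℍ²` is holomorphic at the path `γ`. -/
def StemHoloAt {n : ℕ} (Ω : Set (Fin n → ℍ[ℝ])) (F : PathC n → ℍ[ℝ] × ℍ[ℝ])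
    (γ : PathC n) : Prop :=
  ∃ r > 0, (∀ z ∈ Metric.ball (γ 1) r, PathIn Ω (concatSeg γ z)) ∧
    ∀ z ∈ Metric.ball (γ 1) r,
      DifferentiableAt ℝ (fun w => F (concatSeg γ w)) z ∧
      ∀ ℓ : Fin n,
        fderiv ℝ (fun w => F (concatSeg γ w)) z (Pi.single ℓ 1)
          + sigmaAct (fderiv ℝ (fun w => F (concatSeg γ w)) z (Pi.single ℓ Complex.I)) = 0

/-- `F` is holomorphic (at every path of `𝒫(ℂⁿ, Ω)`). -/
def StemHolo {n : ℕ} (Ω : Set (Fin n → ℍ[ℝ])) (F : PathC n → ℍ[ℝ] × ℍ[ℝ]) : Prop :=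
  ∀ γ, PathIn Ω γ → StemHoloAt Ω F γ

/-- `E` is a complex-analytic subset of the open set `U ⊂ ℂⁿ`. -/
def IsComplexAnalyticSubset {n : ℕ} (U E : Set (Fin n → ℂ)) : Prop :=
  E ⊆ U ∧ ∀ z ∈ U, ∃ V, V ⊆ U ∧ IsOpen V ∧ z ∈ V ∧
    ∃ (m : ℕ) (h : Fin m → (Fin n → ℂ) → ℂ),
      (∀ j, DifferentiableOn ℂ (h j) V) ∧ E ∩ V = {w | w ∈ V ∧ ∀ j, h j w = 0}

/-- `A` is a path-slice analytic subset of the slice-domain `Ω`. -/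
def PathSliceAnalytic {n : ℕ} (Ω A : Set (Fin n → ℍ[ℝ])) : Prop :=
  A = Ω ∨ ∀ γ : PathC n, PathIn Ω γ →
    ∃ r > 0, ∃ rI : ℍ[ℝ] → ℝ, (∀ I ∈ SGamma Ω γ, rI I ∈ Set.Ioc (0 : ℝ) r) ∧
      ∃ E : Set (Fin n → ℂ), IsComplexAnalyticSubset (Metric.ball (γ 1) r) E ∧
        E ≠ Metric.ball (γ 1) r ∧
        ∀ I ∈ SGamma Ω γ, A ∩ BI I (psi I (γ 1)) (rI I) ⊆ psi I '' E



section AuxLemmas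

open Quaternion

lemma SQ_props {K : ℍ[ℝ]} (h : K ∈ SQ) : K.re = 0 ∧ ‖K‖ = 1 := by
  have h' : K * K = -1 := by rw [← sq]; exact h
  have h1 : K.re * K.re - K.imI * K.imI - K.imJ * K.imJ - K.imK * K.imK = -1 := by
    have := congrArg QuaternionAlgebra.re h'
    simpa [Quaternion.re_mul] using this
  have h2 : K.re * K.imI = 0 := by
    have := congrArg QuaternionAlgebra.imI h'
    simp [Quaternion.imI_mul] at this
    nlinarith [this]
  have h3 : K.re * K.imJ = 0 := by
    have := congrArg QuaternionAlgebra.imJ h'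
    simp [Quaternion.imJ_mul] at this
    nlinarith [this]
  have h4 : K.re * K.imK = 0 := by
    have := congrArg QuaternionAlgebra.imK h'
    simp [Quaternion.imK_mul] at this
    nlinarith [this]
  have hre : K.re = 0 := by nlinarith [sq_nonneg K.re, sq_nonneg (K.re * K.re)]
  refine ⟨hre, ?_⟩
  have hns : Quaternion.normSq K = 1 := by
    rw [Quaternion.normSq_def']
    nlinarith [h1, hre]
  have := Quaternion.normSq_eq_norm_mul_self K
  nlinarith [norm_nonneg K, this, hns]

lemma SQ_ne_zero {K : ℍ[ℝ]} (h : K ∈ SQ) : K ≠ 0 := by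
  intro h0
  have := (SQ_props h).2
  rw [h0] at this; simp at this

lemma add_smul_inj {K : ℍ[ℝ]} (hK : K ∈ SQ) {x y x' y' : ℝ}
    (h : (x : ℍ[ℝ]) + y • K = (x' : ℍ[ℝ]) + y' • K) : x = x' ∧ y = y' := by
  have hre := congrArg QuaternionAlgebra.re h
  simp [Quaternion.re_smul, (SQ_props hK).1] at hre
  have hy : y • K = y' • K := by
    have := h
    rw [hre] at this
    exact add_left_cancel this
  have : (y - y') • K = 0 := by rw [sub_smul, hy, sub_self]
  rcases smul_eq_zero.mp this with h' | h'
  · exact ⟨hre, by linarith [sub_eq_zero.mp (by linarith [h'] : y - y' = 0)]⟩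
  · exact absurd h' (SQ_ne_zero hK)

lemma isRealQ_iff {K : ℍ[ℝ]} (hK : K ∈ SQ) (x y : ℝ) :
    IsRealQ ((x : ℍ[ℝ]) + y • K) ↔ y = 0 := by
  constructor
  · rintro ⟨r, hr⟩
    have : (x : ℍ[ℝ]) + y • K = (r : ℍ[ℝ]) + (0 : ℝ) • K := by simpa using hr
    exact (add_smul_inj hK this).2
  · rintro rfl; exact ⟨x, by simp⟩

lemma psi_inj {n : ℕ} {K : ℍ[ℝ]} (hK : K ∈ SQ) {w w' : Fin n → ℂ}
    (h : psi K w = psi K w') : w = w' := by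
  funext k
  have := congrFun h k
  simp only [psi] at this
  obtain ⟨h1, h2⟩ := add_smul_inj hK this
  exact Complex.ext h1 h2

lemma psi_re {n : ℕ} {K : ℍ[ℝ]} (hK : K ∈ SQ) (z : Fin n → ℂ) (k : Fin n) :
    (psi K z k).re = (z k).re := by
  simp [psi, Quaternion.re_smul, (SQ_props hK).1]

lemma frakI_nonreal {n : ℕ} {K : ℍ[ℝ]} (hK : K ∈ SQ) {z : Fin n → ℂ} :
    (¬ ∀ k, IsRealQ (psi K z k)) ↔ ¬ ∀ k, (z k).im = 0 := by
  simp only [psi]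
  constructor <;> intro h h' <;> exact h fun k => by
    first
    | exact (isRealQ_iff hK _ _).mpr (h' k)
    | exact (isRealQ_iff hK _ _).mp (h' k)

lemma frakI_psi {n : ℕ} {K : ℍ[ℝ]} (hK : K ∈ SQ) {z : Fin n → ℂ}
    (hne : (Finset.univ.filter fun k => (z k).im ≠ 0).Nonempty) :
    frakI (psi K z) =
      (|(z ((Finset.univ.filter fun k => (z k).im ≠ 0).min' hne)).im|⁻¹ *
        (z ((Finset.univ.filter fun k => (z k).im ≠ 0).min' hne)).im) • K := by
  have hnotreal : ¬ ∀ k, IsRealQ (psi K z k) := by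
    obtain ⟨k, hk⟩ := hne
    intro hall
    have := hall k
    simp only [Finset.mem_filter, Finset.mem_univ, true_and] at hk
    simp only [psi] at this
    exact hk ((isRealQ_iff hK _ _).mp this)
  rw [frakI, dif_neg hnotreal]
  have hmin : ∀ (h1 : (Finset.univ.filter fun k => ¬ IsRealQ (psi K z k)).Nonempty),
      (Finset.univ.filter fun k => ¬ IsRealQ (psi K z k)).min' h1
      = (Finset.univ.filter fun k => (z k).im ≠ 0).min' hne := by
    intro h1
    congr 1
    ext k
    simp only [Finset.mem_filter, Finset.mem_univ, true_and]
    simp only [psi]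
    rw [isRealQ_iff hK]
  rw [hmin]
  set k₀ := (Finset.univ.filter fun k => (z k).im ≠ 0).min' hne with hk₀
  have hsub : psi K z k₀ - ((psi K z k₀).re : ℍ[ℝ]) = (z k₀).im • K := by
    rw [psi_re hK]
    simp [psi]
  show ‖psi K z k₀ - ((psi K z k₀).re : ℍ[ℝ])‖⁻¹ • (psi K z k₀ - ((psi K z k₀).re : ℍ[ℝ])) = _
  rw [hsub, norm_smul, (SQ_props hK).2, mul_one, Real.norm_eq_abs, smul_smul]

lemma stem_agree {n : ℕ} (Ω₁ Ω₂ : Set (Fin n → ℍ[ℝ])) (hsp : StemPreserving Ω₁ Ω₂)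
    (f : (Fin n → ℍ[ℝ]) → ℍ[ℝ]) (F : PathC n → ℍ[ℝ] × ℍ[ℝ]) (hF : IsStem Ω₂ f F)
    (α β : PathC n) (hα : PathIn Ω₁ α) (hβ : PathIn Ω₁ β) (hend : α 1 = β 1)
    (K₀ : ℍ[ℝ]) (hK₀ : K₀ ∈ SQ) (hKα : pathInSlice Ω₁ K₀ α) (hKβ : pathInSlice Ω₁ K₀ β) :
    F α = F β := by
  classical
  let pα : Path (α 0) (α 1) := ⟨⟨α, hα.1.1⟩, rfl, rfl⟩
  let pβ : Path (β 0) (β 1) := ⟨⟨β, hβ.1.1⟩, rfl, rfl⟩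
  let p : Path (α 0) (β 1) := (pα.trans ((pβ.symm).cast hend rfl)).trans pβ
  let η : PathC n := fun t => p t
  have hrange : Set.range η = Set.range α ∪ Set.range β := by
    have h1 : Set.range η = Set.range p := rfl
    rw [h1]
    rw [Path.trans_range, Path.trans_range, Path.cast_coe, Path.symm_range]
    have hpα : Set.range pα = Set.range α := rfl
    have hpβ : Set.range pβ = Set.range β := rfl
    rw [hpα, hpβ]
    rw [Set.union_assoc, Set.union_self]
  have hηcont : Continuous η := p.continuous
  have hη0 : η 0 = α 0 := p.source
  have hPη : IsPathP η := ⟨hηcont, by rw [hη0]; exact hα.1.2⟩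
  have hslice : ∀ (Ω : Set (Fin n → ℍ[ℝ])) (K : ℍ[ℝ]),
      pathInSlice Ω K α → pathInSlice Ω K β → pathInSlice Ω K η := by
    intro Ω K ha hb t
    have : η t ∈ Set.range α ∪ Set.range β := by
      rw [← hrange]; exact ⟨t, rfl⟩
    rcases this with ⟨s, hs⟩ | ⟨s, hs⟩
    · rw [← hs]; exact ha s
    · rw [← hs]; exact hb s
  have hPathInη : PathIn Ω₁ η := ⟨hPη, K₀, hK₀, hslice _ _ hKα hKβ⟩
  obtain ⟨K₁, hK₁, K₂, hK₂, hne⟩ := hsp.1 η hPathInη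
  have hsub : ∀ K, K ∈ SGamma Ω₂ η → K ∈ SGamma Ω₂ α ∧ K ∈ SGamma Ω₂ β := by
    rintro K ⟨hKSQ, hKsl⟩
    constructor <;> refine ⟨hKSQ, fun t => ?_⟩
    · have : α t ∈ Set.range η := by rw [hrange]; exact Or.inl ⟨t, rfl⟩
      obtain ⟨s, hs⟩ := this
      rw [← hs]; exact hKsl s
    · have : β t ∈ Set.range η := by rw [hrange]; exact Or.inr ⟨t, rfl⟩
      obtain ⟨s, hs⟩ := this
      rw [← hs]; exact hKsl s
  have hPαΩ₂ : PathIn Ω₂ α := ⟨hα.1, K₁, (hsub K₁ hK₁).1⟩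
  have hPβΩ₂ : PathIn Ω₂ β := ⟨hβ.1, K₁, (hsub K₁ hK₁).2⟩
  have e : ∀ K, K ∈ SGamma Ω₂ η →
      (F α).1 + K * (F α).2 = (F β).1 + K * (F β).2 := by
    intro K hK
    have ha := hF α hPαΩ₂ K (hsub K hK).1
    have hb := hF β hPβΩ₂ K (hsub K hK).2
    rw [hend] at ha
    rw [← ha, ← hb]
  have e₁ := e K₁ hK₁
  have e₂ := e K₂ hK₂
  have h3 : (K₁ - K₂) * ((F α).2 - (F β).2) = 0 := by
    have expand : (K₁ - K₂) * ((F α).2 - (F β).2)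
        = ((F α).1 + K₁ * (F α).2) - ((F α).1 + K₂ * (F α).2)
          - (((F β).1 + K₁ * (F β).2) - ((F β).1 + K₂ * (F β).2)) := by
      noncomm_ring
    rw [expand, e₁, e₂, sub_self]
  have hA₂ : (F α).2 = (F β).2 := by
    rcases mul_eq_zero.mp h3 with h' | h'
    · exact absurd (sub_eq_zero.mp h') hne
    · exact sub_eq_zero.mp h'
  have hA₁ : (F α).1 = (F β).1 := by
    rw [hA₂] at e₁
    exact add_right_cancel e₁
  exact Prod.ext hA₁ hA₂

end AuxLemmas

/-- a zero of the symmetrization propagates over the whole endpoint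
circle `γ^{𝕊(Ω₁,γ)}(1)`. -/
theorem symm_zero_circle {n : ℕ} (Ω₁ Ω₂ : Set (Fin n → ℍ[ℝ]))
    (h1 : Ω₁ ⊆ HSliceCone n) (h2 : Ω₂ ⊆ HSliceCone n)
    (hrpc : RealPathConnected Ω₁) (hsp : StemPreserving Ω₁ Ω₂)
    (f : (Fin n → ℍ[ℝ]) → ℍ[ℝ]) (hf : PathSlice Ω₂ f)
    (γ : PathC n) (hγ : PathIn Ω₁ γ) (I : ℍ[ℝ]) (hI : I ∈ SGamma Ω₁ γ)
    (h0 : symmF Ω₁ Ω₂ f (psi I (γ 1)) = 0) :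
    ∀ J ∈ SGamma Ω₁ γ, symmF Ω₁ Ω₂ f (psi J (γ 1)) = 0 := by
  intro J hJ
  obtain ⟨hISQ, hIsl⟩ := hI
  obtain ⟨hJSQ, hJsl⟩ := hJ
  by_cases hreal : ∀ k, ((γ 1) k).im = 0
  · have hpsieq : psi J (γ 1) = psi I (γ 1) := by
      funext k; simp [psi, hreal k]
    rw [hpsieq]; exact h0
  · -- setup
    have hne : (Finset.univ.filter fun k => ((γ 1) k).im ≠ 0).Nonempty := by
      push_neg at hreal
      obtain ⟨k, hk⟩ := hreal
      exact ⟨k, Finset.mem_filter.mpr ⟨Finset.mem_univ k, hk⟩⟩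
    set k₀ := (Finset.univ.filter fun k => ((γ 1) k).im ≠ 0).min' hne with hk₀def
    set c : ℝ := |((γ 1) k₀).im|⁻¹ * ((γ 1) k₀).im with hcdef
    have him : ((γ 1) k₀).im ≠ 0 := by
      have := Finset.min'_mem _ hne
      rw [← hk₀def] at this
      simpa [Finset.mem_filter] using this
    have hc2 : c * c = 1 := by
      have habs : |((γ 1) k₀).im| ≠ 0 := abs_ne_zero.mpr him
      rw [hcdef]
      field_simp
      exact (sq_abs _).symm
    -- the reflected path γ'
    set γ' : PathC n := fun t k => (((γ t k).re : ℂ) + ((c * (γ t k).im : ℝ) : ℂ) * Complex.I)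
      with hγ'def
    have hγ're : ∀ t k, (γ' t k).re = (γ t k).re := by intro t k; simp [hγ'def]
    have hγ'im : ∀ t k, (γ' t k).im = c * (γ t k).im := by intro t k; simp [hγ'def]
    have hγ'cont : Continuous γ' := by
      apply continuous_pi; intro k
      have hk : Continuous fun t => γ t k := (continuous_apply k).comp hγ.1.1
      exact ((Complex.continuous_ofReal.comp (Complex.continuous_re.comp hk)).add
        ((Complex.continuous_ofReal.comp
          (continuous_const.mul (Complex.continuous_im.comp hk))).mul continuous_const))
    have hpsi' : ∀ (K : ℍ[ℝ]) (t : unitInterval), psi (c • K) (γ' t) = psi K (γ t) := by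
      intro K t; funext k
      simp only [psi, hγ're, hγ'im, smul_smul]
      congr 1
      rw [show c * (γ t k).im * c = (c * c) * (γ t k).im by ring, hc2, one_mul]
    -- stem function
    set F := stemOf Ω₂ f with hFdef
    have hF : IsStem Ω₂ f F := Classical.epsilon_spec hf
    set A := (F γ').1 with hAdef
    set B := (F γ').2 with hBdef
    set x : ℝ := Quaternion.normSq A - Quaternion.normSq B with hxdef
    set y : ℝ := 2 * (star A * B).re with hydef
    -- the main computation, uniform in K
    have main : ∀ K, K ∈ SQ → pathInSlice Ω₁ K γ →
        symmF Ω₁ Ω₂ f (psi K (γ 1)) = ((x : ℍ[ℝ]) + (c * y) • K) := by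
      intro K hKSQ hKsl
      have hμ : frakI (psi K (γ 1)) = c • K := by
        rw [hcdef, hk₀def]
        exact frakI_psi hKSQ hne
      have hcKSQ : c • K ∈ SQ := by
        show (c • K) ^ 2 = -1
        rw [sq, smul_mul_smul_comm, hc2, one_smul, ← sq]
        exact hKSQ
      have hwit : PathIn Ω₁ γ' ∧ pathInSlice Ω₁ (c • K) γ' ∧
          psi (c • K) (γ' 1) = psi K (γ 1) := by
        refine ⟨⟨⟨hγ'cont, ?_⟩, c • K, hcKSQ, ?_⟩, ?_, ?_⟩
        · intro k; rw [hγ'im, hγ.1.2 k, mul_zero]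
        · intro t; rw [hpsi']; exact hKsl t
        · intro t; rw [hpsi']; exact hKsl t
        · rw [hpsi']
      have hδ := Classical.epsilon_spec (p := fun g : PathC n =>
        PathIn Ω₁ g ∧ pathInSlice Ω₁ (c • K) g ∧ psi (c • K) (g 1) = psi K (γ 1)) ⟨γ', hwit⟩
      set δ := Classical.epsilon (fun g : PathC n =>
        PathIn Ω₁ g ∧ pathInSlice Ω₁ (c • K) g ∧ psi (c • K) (g 1) = psi K (γ 1)) with hδdef
      have hnotreal : ¬ ∀ k, IsRealQ (psi K (γ 1) k) := (frakI_nonreal hKSQ).mpr hreal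
      have hscr : scrF Ω₁ Ω₂ f (psi K (γ 1)) = F δ := by
        simp only [scrF, if_neg hnotreal, hμ, hFdef, hδdef]
      have hδend : δ 1 = γ' 1 := psi_inj hcKSQ (hδ.2.2.trans hwit.2.2.symm)
      have hFδ : F δ = F γ' :=
        stem_agree Ω₁ Ω₂ hsp f F hF δ γ' hδ.1 hwit.1 hδend (c • K) hcKSQ hδ.2.1 hwit.2.1
      have hKK : (c • K) * (c • K) = -1 := by rw [← sq]; exact hcKSQ
      show starProdF Ω₁ Ω₂ (sliceConj Ω₁ Ω₂ f) f (psi K (γ 1)) = _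
      simp only [starProdF, sliceConj, hscr, hFδ, hμ, ← hAdef, ← hBdef]
      have hBA : star B * A + star A * B = ((2 * (star A * B).re : ℝ) : ℍ[ℝ]) := by
        have h1 := Quaternion.star_add_self' (star A * B)
        rwa [star_mul, star_star] at h1
      calc (star A + c • K * star B) * A + c • K * (star A + c • K * star B) * B
          = star A * A + (c • K) * (star B * A) + (c • K) * (star A * B)
            + ((c • K) * (c • K)) * (star B * B) := by noncomm_ring
        _ = (star A * A - star B * B) + (c • K) * (star B * A + star A * B) := by
            rw [hKK]; noncomm_ring
        _ = ((x : ℍ[ℝ]) + (c * y) • K) := by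
            rw [Quaternion.star_mul_self, Quaternion.star_mul_self, hBA,
              Quaternion.mul_coe_eq_smul, smul_smul, hxdef, hydef, Quaternion.coe_sub,
              mul_comm (2 * (star A * B).re) c]
    -- extract x = 0 and c*y = 0 from the zero at I
    have hI0 : ((x : ℍ[ℝ]) + (c * y) • I) = 0 := by rw [← main I hISQ hIsl]; exact h0
    have hx : x = 0 := by
      have hre := congrArg QuaternionAlgebra.re hI0
      simpa [Quaternion.re_smul, (SQ_props hISQ).1] using hre
    have hcy : c * y = 0 := by
      have h1 : (c * y) • I = 0 := by
        have := hI0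
        rw [hx] at this
        simpa using this
      rcases smul_eq_zero.mp h1 with h' | h'
      · exact h'
      · exact absurd h' (SQ_ne_zero hISQ)
    rw [main J hJSQ hJsl, hx, hcy]
    simp


end
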